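/- Let f : P → Q be a contraction between finite posets. If P is a tree, then Q is a tree. -/

import Mathlib

section Defs

variable {α β : Type*}

/-- `f` is monotone from the relation `r` to the relation `s`. -/
def Mono (r : α → α → Prop) (s : β → β → Prop) (f : α → β) : Prop :=
  ∀ a b, r a b → s (f a) (f b)

/-- A monotone map `f` is convex if whenever `f x ≤ w ≤ f y` there is a unique
`p` with `x ≤ p ≤ y` and `f p = w`. -/
def ConvexMap (r : α → α → Prop) (s : β → β → Prop) (f : α → β) : Prop :=
  Mono r s f ∧ ∀ x y w, s (f x) w → s w (f y) → ∃! p, r x p ∧ r p y ∧ f p = w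

/-- A subset `S` is connected (w.r.t. the order relation `r`) if any two of its
elements are joined by a finite zigzag of comparable pairs lying in `S`. -/
def ConnectedIn (r : α → α → Prop) (S : Set α) : Prop :=
  ∀ x ∈ S, ∀ y ∈ S,
    Relation.ReflTransGen (fun a b => a ∈ S ∧ b ∈ S ∧ (r a b ∨ r b a)) x y

/-- A subset `S` is order-convex w.r.t. `r`. -/
def OrdConvexIn (r : α → α → Prop) (S : Set α) : Prop :=
  ∀ x ∈ S, ∀ y ∈ S, ∀ z, r x z → r z y → z ∈ S

/-- The strict relation associated to `r`. -/
def LtRel (r : α → α → Prop) (a b : α) : Prop := r a b ∧ ¬ r b a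

/-- `b` covers `a` w.r.t. `r`. -/
def CovRel (r : α → α → Prop) (a b : α) : Prop :=
  LtRel r a b ∧ ∀ c, ¬ (LtRel r a c ∧ LtRel r c b)

/-- A contraction: a monotone surjection with connected convex fibres that lifts covers. -/
def IsContraction (r : α → α → Prop) (s : β → β → Prop) (f : α → β) : Prop :=
  Mono r s f ∧ Function.Surjective f ∧
  (∀ q, ConnectedIn r (f ⁻¹' {q}) ∧ OrdConvexIn r (f ⁻¹' {q})) ∧
  ∀ q q', CovRel s q q' → ∃ p p', CovRel r p p' ∧ f p = q ∧ f p' = q'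

/-- A collapse map: a monotone surjection which partially reflects the strict order. -/
def IsCollapse (r : α → α → Prop) (s : β → β → Prop) (f : α → β) : Prop :=
  Mono r s f ∧ Function.Surjective f ∧ ∀ x y, LtRel s (f x) (f y) → LtRel r x y

/-- `r` is a partial order relation. -/
def IsPartialOrderRel (r : α → α → Prop) : Prop :=
  (∀ a, r a a) ∧ (∀ a b c, r a b → r b c → r a c) ∧ (∀ a b, r a b → r b a → a = b)

/-- `r` is a preorder relation. -/
def IsPreorderRel (r : α → α → Prop) : Prop :=
  (∀ a, r a a) ∧ ∀ a b c, r a b → r b c → r a c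

/-- The symmetrization `x ∼ y` of a preorder relation. -/
def Sim (r : α → α → Prop) (x y : α) : Prop := r x y ∧ r y x

/-- The quotient preorder `T/T'`: the transitive closure of
`x R y ⟺ (x ≤_T y or y ≤_{T'} x)`. -/
def QuotRel (r r' : α → α → Prop) : α → α → Prop :=
  Relation.TransGen (fun x y => r x y ∨ r' y x)

/-- The identity-on-objects monotone map of preorders `T' → T` is admissible. -/
def Admissible (r' r : α → α → Prop) : Prop :=
  (∀ x y, r' x y → r x y) ∧
  (∀ Y : Set α, ConnectedIn r' Y → ∀ x ∈ Y, ∀ y ∈ Y, (r x y ↔ r' x y)) ∧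
  (∀ x y, Sim (QuotRel r r') x y ↔ Sim (QuotRel r' r') x y)

/-- The identity-on-objects monotone map of preorders `T → V` is a contraction of preorders. -/
def PreContraction (r v : α → α → Prop) : Prop :=
  (∀ x y, r x y → v x y) ∧
  (∀ x, ConnectedIn r {y | Sim v x y}) ∧
  ∀ a a', CovRel v a a' → ∃ t t', CovRel r t t' ∧ t = a ∧ t' = a'

/-- The setoid on `α` whose relation is the symmetrization of the preorder relation `r`. -/
def simSetoid (r : α → α → Prop) (h : IsPreorderRel r) : Setoid α where
  r := Sim r
  iseqv := ⟨fun x => ⟨h.1 x, h.1 x⟩, fun hxy => ⟨hxy.2, hxy.1⟩,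
    fun h1 h2 => ⟨h.2 _ _ _ h1.1 h2.1, h.2 _ _ _ h2.2 h1.2⟩⟩

/-- The partial order relation on the posetification (antisymmetrization) of a preorder. -/
def posetLe (r : α → α → Prop) (h : IsPreorderRel r) :
    Quotient (simSetoid r h) → Quotient (simSetoid r h) → Prop :=
  Quotient.lift₂ r (fun _ _ _ _ hx hy => propext
    ⟨fun hr => h.2 _ _ _ (h.2 _ _ _ hx.2 hr) hy.1,
     fun hr => h.2 _ _ _ (h.2 _ _ _ hx.1 hr) hy.2⟩)

/-- A tree: a poset with a greatest element in which every interval is linearly ordered. -/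
def IsTreeRel (r : α → α → Prop) : Prop :=
  (∃ t, ∀ p, r p t) ∧
  ∀ p p' z w, r p z → r z p' → r p w → r w p' → (r z w ∨ r w z)

/-- The connected component of `p` w.r.t. the order relation `r`. -/
def component (r : α → α → Prop) (p : α) : Set α :=
  {q | Relation.ReflTransGen (fun a b => r a b ∨ r b a) p q}

/-- A forest: a poset each of whose connected components is a tree. -/
def IsForestRel (r : α → α → Prop) : Prop :=
  ∀ p, IsTreeRel (fun a b : component r p => r a.1 b.1)

end Defs

/-- the target of a contraction of finite posets whose source is a
tree is a tree. -/
theorem contraction_of_tree_is_tree {P Q : Type*} [PartialOrder P] [PartialOrder Q]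
    [Fintype P] [Fintype Q]
    (f : P → Q)
    (hf : IsContraction (fun a b : P => a ≤ b) (fun a b : Q => a ≤ b) f)
    (hP : IsTreeRel (fun a b : P => a ≤ b)) :
    IsTreeRel (fun a b : Q => a ≤ b) := by
  obtain ⟨hmono, hsurj, hfib, hcov⟩ := hf
  obtain ⟨⟨t, ht⟩, htree⟩ := hP
  -- in a tree, two elements with a common lower bound are comparable
  have hcomp : ∀ x z w : P, x ≤ z → x ≤ w → z ≤ w ∨ w ≤ z := fun x z w hz hw =>
    htree x t z w hz (ht z) hw (ht w)
  -- cover lifting along fibres: any point of the fibre of q admits a point above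
  -- mapping to q' when q ⋖ q'
  have key : ∀ q q' : Q, CovRel (fun a b : Q => a ≤ b) q q' →
      ∀ x : P, f x = q → ∃ x', x ≤ x' ∧ f x' = q' := by
    intro q q' hqq' x hx
    obtain ⟨a, a', ⟨⟨hlt, hnlt⟩, _⟩, ha, ha'⟩ := hcov q q' hqq'
    have haa' : a ≤ a' := hlt
    have hqltq' : q < q' := lt_iff_le_not_ge.mpr hqq'.1
    have hzig := (hfib q).1 a (by simp [Set.mem_preimage, ha]) x
      (by simp [Set.mem_preimage, hx])
    clear hx
    induction hzig with
    | refl => exact ⟨a', haa', ha'⟩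
    | tail _ hstep ih =>
      rename_i y y₂ _
      obtain ⟨x', hyx', hfx'⟩ := ih
      obtain ⟨hy, hy₂, hcase⟩ := hstep
      have hfy₂ : f y₂ = q := hy₂
      rcases hcase with h1 | h2
      · rcases hcomp y y₂ x' h1 hyx' with h | h
        · exact ⟨x', h, hfx'⟩
        · exfalso
          have hle : q' ≤ q := by
            have := hmono x' y₂ h
            rwa [hfx', hfy₂] at this
          exact absurd (le_antisymm hqltq'.le hle) hqltq'.ne
      · exact ⟨x', le_trans h2 hyx', hfx'⟩
  -- translation: CovBy implies CovRel
  have covrel_of_covBy : ∀ q q' : Q, q ⋖ q' → CovRel (fun a b : Q => a ≤ b) q q' := by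
    intro q q' h
    refine ⟨⟨h.lt.le, fun hle => absurd (le_antisymm h.lt.le hle) h.lt.ne⟩, ?_⟩
    rintro c ⟨⟨h1, h2⟩, ⟨h3, h4⟩⟩
    exact h.2 (lt_iff_le_not_ge.mpr ⟨h1, h2⟩) (lt_iff_le_not_ge.mpr ⟨h3, h4⟩)
  -- up-lifting along arbitrary inequalities
  have uplift : ∀ q : Q, ∀ w, q ≤ w → ∀ x, f x = q → ∃ x', x ≤ x' ∧ f x' = w := by
    intro q
    refine WellFoundedGT.induction
      (motive := fun q => ∀ w, q ≤ w → ∀ x, f x = q → ∃ x', x ≤ x' ∧ f x' = w) q ?_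
    intro q IH w hqw x hx
    rcases eq_or_lt_of_le hqw with rfl | hlt
    · exact ⟨x, le_refl x, hx⟩
    · obtain ⟨z, hcovz, hzw⟩ := exists_covBy_le_of_lt hlt
      obtain ⟨x₁, hxx₁, hfx₁⟩ := key q z (covrel_of_covBy q z hcovz) x hx
      obtain ⟨x', hx₁x', hfx'⟩ := IH z hcovz.lt w hzw x₁ hfx₁
      exact ⟨x', le_trans hxx₁ hx₁x', hfx'⟩
  constructor
  · exact ⟨f t, fun q => by obtain ⟨x, rfl⟩ := hsurj q; exact hmono x t (ht x)⟩
  · intro q q' z w hqz _ hqw _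
    obtain ⟨x, hx⟩ := hsurj q
    obtain ⟨xz, hxz, hfz⟩ := uplift q z hqz x hx
    obtain ⟨xw, hxw, hfw⟩ := uplift q w hqw x hx
    rcases hcomp x xz xw hxz hxw with h | h
    · left; rw [← hfz, ← hfw]; exact hmono _ _ h
    · right; rw [← hfz, ← hfw]; exact hmono _ _ h
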